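/- Let Γ ≤ ℍ^× be a finite subgroup and n ≥ 2. Each element w ∈ W_n(Γ) may be written uniquely as a product w = x·v, where v lies in the copy of W_{n−1}(Γ) fixing the last standard basis vector e_n, and x belongs to the set {1} ∪ {γ_n (m n) γ_n^{−1} : 1 ≤ m < n, γ ∈ Γ} ∪ {γ_n : γ ∈ Γ, γ ≠ 1}, where γ_n denotes the diagonal matrix with γ in the n-th position and 1 elsewhere, and (m n) is the permutation matrix of the transposition of m and n. Moreover the fixed space of w equals the intersection of the fixed spaces of x and v, and codim fix(w) = codim fix(x) + codim fix(v). -/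

import Mathlib

noncomputable section

local notation "ℍ" => Quaternion ℝ

/-- The fixed subspace `fix(w) = ker(w − 1) = {x | w·x = x}` of a matrix acting on the
right ℍ-vector space `ℍⁿ` by left multiplication, as a right ℍ-subspace
(a submodule over `ℍᵐᵒᵖ`). -/
def fixSpace {n : ℕ} (w : Matrix (Fin n) (Fin n) ℍ) : Submodule ℍᵐᵒᵖ (Fin n → ℍ) where
  carrier := {x | w.mulVec x = x}
  add_mem' := by
    intro a b ha hb
    simp only [Set.mem_setOf_eq] at *
    rw [Matrix.mulVec_add, ha, hb]
  zero_mem' := by simp [Set.mem_setOf_eq]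
  smul_mem' := by
    intro c x hx
    simp only [Set.mem_setOf_eq] at *
    rw [Matrix.mulVec_smul, hx]

/-- `codim fix(w) = n − dim_ℍ fix(w)`. -/
def codimFix {n : ℕ} (w : Matrix (Fin n) (Fin n) ℍ) : ℕ :=
  n - Module.finrank ℍᵐᵒᵖ (fixSpace w)

/-- The permutation matrix of `σ`, acting on column vectors by `(P x) i = x (σ i)`. -/
def permMat {n : ℕ} (σ : Equiv.Perm (Fin n)) : Matrix (Fin n) (Fin n) ℍ :=
  Matrix.of fun i j => if σ i = j then 1 else 0

/-- The quaternionic reflection group `W_n(Γ,Δ)`: the subgroup of `GL_n(ℍ)` generated by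
the permutation matrices together with the diagonal matrices `diag(γ₁,…,γ_n)` with all
`γ i ∈ Γ` and `γ₁γ₂⋯γ_n ∈ Δ`. -/
def Wgrp (n : ℕ) (Γ Δ : Subgroup ℍˣ) : Subgroup (Matrix (Fin n) (Fin n) ℍ)ˣ :=
  Subgroup.closure
    {g | (∃ σ : Equiv.Perm (Fin n), g.val = permMat σ) ∨
      (∃ γ : Fin n → ℍˣ, (∀ i, γ i ∈ Γ) ∧ (List.ofFn γ).prod ∈ Δ ∧
        g.val = Matrix.diagonal fun i => (γ i : ℍ))}

/-- `diagAt m γ` is the diagonal matrix with `γ` in position `m` and `1` elsewhere. -/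
def diagAt {n : ℕ} (m : Fin n) (γ : ℍ) : Matrix (Fin n) (Fin n) ℍ :=
  Matrix.diagonal fun i => if i = m then γ else 1

/-- The set `{1} ∪ {γ_n (m n) γ_n⁻¹ : m ≠ n, γ ∈ Γ} ∪ {γ_n : γ ∈ Γ, γ ≠ 1}` of coset
representatives, where the last index of `Fin (n+1)` plays the role of `n`. -/
def cosetReps (n : ℕ) (Γ : Subgroup ℍˣ) : Set (Matrix (Fin (n+1)) (Fin (n+1)) ℍ) :=
  {1} ∪
  {x | ∃ m : Fin (n+1), m ≠ Fin.last n ∧ ∃ γ ∈ Γ,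
    x = diagAt (Fin.last n) (γ : ℍ) * permMat (Equiv.swap m (Fin.last n)) *
      diagAt (Fin.last n) ((γ⁻¹ : ℍˣ) : ℍ)} ∪
  {x | ∃ γ ∈ Γ, γ ≠ 1 ∧ x = diagAt (Fin.last n) (γ : ℍ)}

lemma permMat_mulVec {k : ℕ} (σ : Equiv.Perm (Fin k)) (x : Fin k → ℍ) :
    (permMat σ).mulVec x = fun i => x (σ i) := by
  funext i
  simp [permMat, Matrix.mulVec, dotProduct, ite_mul]

lemma permMat_mul {k : ℕ} (σ τ : Equiv.Perm (Fin k)) :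
    permMat σ * permMat τ = permMat (τ * σ) := by
  refine Matrix.ext fun i j => ?_
  simp only [permMat, Matrix.mul_apply, Matrix.of_apply, ite_mul, one_mul, zero_mul]
  rw [Fintype.sum_eq_single (σ i) (fun b hb => by simp [Ne.symm hb])]
  simp [Equiv.Perm.mul_apply]
  exact if_congr Iff.rfl rfl rfl

lemma permMat_one {k : ℕ} : permMat (1 : Equiv.Perm (Fin k)) = 1 := by
  refine Matrix.ext fun i j => ?_
  simp [permMat, Matrix.one_apply]
  exact if_congr Iff.rfl rfl rfl

lemma diagonal_mul_permMat {k : ℕ} (d : Fin k → ℍ) (τ : Equiv.Perm (Fin k)) :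
    Matrix.diagonal d * permMat τ = permMat τ * Matrix.diagonal (fun i => d (τ.symm i)) := by
  refine Matrix.ext fun i j => ?_
  simp only [permMat, Matrix.mul_apply, Matrix.of_apply, Matrix.diagonal_apply, ite_mul, mul_ite,
    zero_mul, mul_zero, one_mul, mul_one]
  rw [Fintype.sum_eq_single i (fun b hb => by simp [Ne.symm hb]),
    Fintype.sum_eq_single (τ i) (fun b hb => by simp only [ite_eq_right_iff]; intro _ h; exact absurd h.symm hb)]
  by_cases h : τ i = j
  · subst h; simp
  · simp [h]

lemma mono_mul {k : ℕ} (σ τ : Equiv.Perm (Fin k)) (d e : Fin k → ℍˣ) :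
    (permMat σ * Matrix.diagonal fun i => (d i : ℍ)) *
      (permMat τ * Matrix.diagonal fun i => (e i : ℍ)) =
    permMat (τ * σ) * Matrix.diagonal fun i => ((d (τ.symm i) * e i : ℍˣ) : ℍ) := by
  rw [mul_assoc, ← mul_assoc (Matrix.diagonal _), diagonal_mul_permMat, mul_assoc,
    Matrix.diagonal_mul_diagonal, ← mul_assoc, permMat_mul]
  simp

lemma mono_mul_inv {k : ℕ} (σ : Equiv.Perm (Fin k)) (d : Fin k → ℍˣ) :
    (permMat σ * Matrix.diagonal fun i => (d i : ℍ)) *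
      (permMat σ⁻¹ * Matrix.diagonal fun i => (((d (σ i))⁻¹ : ℍˣ) : ℍ)) = 1 := by
  rw [mono_mul]
  have h1 : σ⁻¹ * σ = 1 := inv_mul_cancel σ
  rw [h1, permMat_one, one_mul]
  have : ∀ i, (d ((σ⁻¹).symm i) * (d (σ i))⁻¹ : ℍˣ) = 1 := by
    intro i
    have : (σ⁻¹).symm i = σ i := rfl
    rw [this, mul_inv_cancel]
  simp only [this, Units.val_one]
  exact Matrix.diagonal_one

lemma mono_of_mem {k : ℕ} {Γ : Subgroup ℍˣ} {w : (Matrix (Fin k) (Fin k) ℍ)ˣ}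
    (hw : w ∈ Wgrp k Γ Γ) :
    ∃ σ : Equiv.Perm (Fin k), ∃ d : Fin k → ℍˣ, (∀ i, d i ∈ Γ) ∧
      w.val = permMat σ * Matrix.diagonal fun i => (d i : ℍ) := by
  induction hw using Subgroup.closure_induction with
  | mem g hg =>
    rcases hg with ⟨σ, hσ⟩ | ⟨γ, hγ, _, hgd⟩
    · exact ⟨σ, 1, fun i => one_mem Γ, by simp [hσ]⟩
    · exact ⟨1, γ, hγ, by simp [hgd, permMat_one]⟩
  | one => exact ⟨1, 1, fun i => one_mem Γ, by simp [permMat_one]⟩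
  | mul a b _ _ ha hb =>
    obtain ⟨σ, d, hd, hav⟩ := ha
    obtain ⟨τ, e, he, hbv⟩ := hb
    exact ⟨τ * σ, fun i => d (τ.symm i) * e i,
      fun i => mul_mem (hd _) (he _), by rw [Units.val_mul, hav, hbv, mono_mul]⟩
  | inv a _ ha =>
    obtain ⟨σ, d, hd, hav⟩ := ha
    refine ⟨σ⁻¹, fun i => (d (σ i))⁻¹, fun i => inv_mem (hd _), ?_⟩
    have := mono_mul_inv σ d
    rw [← hav] at this
    calc (a⁻¹).val = (a⁻¹).val * (a.val * (permMat σ⁻¹ *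
          Matrix.diagonal fun i => (((d (σ i))⁻¹ : ℍˣ) : ℍ))) := by rw [this, mul_one]
      _ = permMat σ⁻¹ * Matrix.diagonal fun i => (((d (σ i))⁻¹ : ℍˣ) : ℍ) := by
          rw [← mul_assoc, Units.inv_mul, one_mul]

def permUnit {k : ℕ} (σ : Equiv.Perm (Fin k)) : (Matrix (Fin k) (Fin k) ℍ)ˣ where
  val := permMat σ
  inv := permMat σ⁻¹
  val_inv := by rw [permMat_mul, inv_mul_cancel, permMat_one]
  inv_val := by rw [permMat_mul, mul_inv_cancel, permMat_one]

def diagUnit {k : ℕ} (d : Fin k → ℍˣ) : (Matrix (Fin k) (Fin k) ℍ)ˣ where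
  val := Matrix.diagonal fun i => (d i : ℍ)
  inv := Matrix.diagonal fun i => ((d i)⁻¹ : ℍˣ)
  val_inv := by rw [Matrix.diagonal_mul_diagonal]; simp
  inv_val := by rw [Matrix.diagonal_mul_diagonal]; simp

lemma permUnit_mem {k : ℕ} (Γ Δ : Subgroup ℍˣ) (σ : Equiv.Perm (Fin k)) :
    permUnit σ ∈ Wgrp k Γ Δ :=
  Subgroup.subset_closure (Or.inl ⟨σ, rfl⟩)

lemma diagUnit_mem {k : ℕ} (Γ : Subgroup ℍˣ) {d : Fin k → ℍˣ} (hd : ∀ i, d i ∈ Γ) :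
    diagUnit d ∈ Wgrp k Γ Γ :=
  Subgroup.subset_closure (Or.inr ⟨d, hd, list_prod_mem (by
    intro x hx
    obtain ⟨i, rfl⟩ := List.mem_ofFn.mp hx
    exact hd i), rfl⟩)

def diagAtUnit {k : ℕ} (m : Fin k) (c : ℍˣ) : (Matrix (Fin k) (Fin k) ℍ)ˣ :=
  diagUnit (fun i => if i = m then c else 1)

lemma diagAtUnit_val {k : ℕ} (m : Fin k) (c : ℍˣ) :
    (diagAtUnit m c).val = diagAt m (c : ℍ) := by
  refine Matrix.ext fun i j => ?_
  simp only [diagAtUnit, diagUnit, diagAt, Matrix.diagonal_apply, apply_ite Units.val,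
    Units.val_one]

lemma diagAtUnit_mem {k : ℕ} {Γ : Subgroup ℍˣ} (m : Fin k) {c : ℍˣ} (hc : c ∈ Γ) :
    diagAtUnit m c ∈ Wgrp k Γ Γ :=
  diagUnit_mem Γ (fun i => by by_cases h : i = m <;> simp [h, hc, one_mem])

lemma diagAt_mulVec {k : ℕ} (m : Fin k) (γ : ℍ) (u : Fin k → ℍ) :
    (diagAt m γ).mulVec u = fun i => (if i = m then γ else 1) * u i := by
  funext i
  exact Matrix.mulVec_diagonal _ _ _

lemma unit_mulVec_inj {k : ℕ} (X : (Matrix (Fin k) (Fin k) ℍ)ˣ) {a b : Fin k → ℍ}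
    (h : X.val.mulVec a = X.val.mulVec b) : a = b := by
  have h2 : (X⁻¹).val.mulVec (X.val.mulVec a) = (X⁻¹).val.mulVec (X.val.mulVec b) := by rw [h]
  rwa [Matrix.mulVec_mulVec, Matrix.mulVec_mulVec, Units.inv_mul, Matrix.one_mulVec,
    Matrix.one_mulVec] at h2

lemma mono_mulVec {k : ℕ} (σ : Equiv.Perm (Fin k)) (d : Fin k → ℍ) (u : Fin k → ℍ) :
    (permMat σ * Matrix.diagonal d).mulVec u = fun i => d (σ i) * u (σ i) := by
  rw [← Matrix.mulVec_mulVec, permMat_mulVec]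
  funext i
  exact Matrix.mulVec_diagonal _ _ _

lemma mem_fixSpace {k : ℕ} {w : Matrix (Fin k) (Fin k) ℍ} {u : Fin k → ℍ} :
    u ∈ fixSpace w ↔ w.mulVec u = u := Iff.rfl

def unopEquiv : ℍᵐᵒᵖ ≃ₗ[ℍᵐᵒᵖ] ℍ where
  toFun c := c.unop
  invFun a := MulOpposite.op a
  left_inv c := rfl
  right_inv a := rfl
  map_add' a b := rfl
  map_smul' a c := by simp [MulOpposite.smul_eq_mul_unop]

instance : Module.Finite ℍᵐᵒᵖ ℍ := Module.Finite.equiv unopEquiv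

lemma finrank_H : Module.finrank ℍᵐᵒᵖ ℍ = 1 := by
  rw [← unopEquiv.finrank_eq, Module.finrank_self]

lemma finrank_pi_H (k : ℕ) : Module.finrank ℍᵐᵒᵖ (Fin k → ℍ) = k := by
  simp [Module.finrank_pi_fintype, finrank_H]

/-- left multiplication as an `ℍᵐᵒᵖ`-linear endomorphism of `ℍ`. -/
def mulLeftOp (γ : ℍ) : ℍ →ₗ[ℍᵐᵒᵖ] ℍ where
  toFun x := γ * x
  map_add' := mul_add γ
  map_smul' c x := by simp [MulOpposite.smul_eq_mul_unop, mul_assoc]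

lemma finrank_ker_of_surj {N : ℕ} (f : (Fin N → ℍ) →ₗ[ℍᵐᵒᵖ] ℍ)
    (hf : Function.Surjective f) :
    Module.finrank ℍᵐᵒᵖ (LinearMap.ker f) = N - 1 := by
  have h1 := LinearMap.finrank_range_add_finrank_ker f
  rw [LinearMap.range_eq_top.mpr hf, finrank_top, finrank_H, finrank_pi_H] at h1
  omega

lemma codim_add {N : ℕ} (A B : Submodule ℍᵐᵒᵖ (Fin N → ℍ))
    (hA : Module.finrank ℍᵐᵒᵖ A = N - 1) (hN : 1 ≤ N)
    (b : Fin N → ℍ) (hbB : b ∈ B) (hbA : b ∉ A) :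
    N - Module.finrank ℍᵐᵒᵖ (A ⊓ B : Submodule ℍᵐᵒᵖ (Fin N → ℍ)) =
      (N - Module.finrank ℍᵐᵒᵖ A) + (N - Module.finrank ℍᵐᵒᵖ B) := by
  have hb0 : b ≠ 0 := fun h => hbA (h ▸ A.zero_mem)
  have htot : Module.finrank ℍᵐᵒᵖ (Fin N → ℍ) = N := finrank_pi_H N
  have hBle : Module.finrank ℍᵐᵒᵖ B ≤ N := (Submodule.finrank_le B).trans htot.le
  have hB1 : 1 ≤ Module.finrank ℍᵐᵒᵖ B := by
    have hsp : Submodule.span ℍᵐᵒᵖ {b} ≤ B := Submodule.span_le.mpr (by simpa using hbB)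
    have := Submodule.finrank_mono hsp
    rwa [finrank_span_singleton hb0] at this
  have hlt : A < A ⊔ B := lt_of_le_of_ne le_sup_left
    (fun h => hbA (h ▸ (le_sup_right : B ≤ A ⊔ B) hbB))
  have hsup : Module.finrank ℍᵐᵒᵖ (A ⊔ B : Submodule ℍᵐᵒᵖ (Fin N → ℍ)) = N := by
    have h2 : Module.finrank ℍᵐᵒᵖ A < Module.finrank ℍᵐᵒᵖ (A ⊔ B : Submodule ℍᵐᵒᵖ (Fin N → ℍ)) :=
      Submodule.finrank_lt_finrank_of_lt hlt
    have h3 : Module.finrank ℍᵐᵒᵖ (A ⊔ B : Submodule ℍᵐᵒᵖ (Fin N → ℍ)) ≤ N :=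
      (Submodule.finrank_le _).trans htot.le
    omega
  have h4 := Submodule.finrank_sup_add_finrank_inf_eq A B
  rw [hsup] at h4
  omega

lemma swapRep_mulVec {n : ℕ} {m : Fin (n+1)} (hm : m ≠ Fin.last n) (γ : ℍˣ)
    (u : Fin (n+1) → ℍ) :
    (diagAt (Fin.last n) (γ : ℍ) * permMat (Equiv.swap m (Fin.last n)) *
      diagAt (Fin.last n) ((γ⁻¹ : ℍˣ) : ℍ)).mulVec u =
    fun i => if i = m then ((γ⁻¹ : ℍˣ) : ℍ) * u (Fin.last n)
      else if i = Fin.last n then (γ : ℍ) * u m else u i := by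
  rw [← Matrix.mulVec_mulVec, ← Matrix.mulVec_mulVec, diagAt_mulVec, permMat_mulVec,
    diagAt_mulVec]
  funext i
  dsimp only
  by_cases h1 : i = m
  · subst h1
    rw [Equiv.swap_apply_left, if_pos rfl, if_pos rfl, if_neg hm, one_mul]
  · by_cases h2 : i = Fin.last n
    · subst h2
      rw [Equiv.swap_apply_right, if_pos rfl, if_neg hm, if_neg h1, if_pos rfl, one_mul]
    · rw [Equiv.swap_apply_of_ne_of_ne h1 h2, if_neg h2, if_neg h2, if_neg h1, if_neg h2,
        one_mul, one_mul]

lemma fixSpace_diagAt {n : ℕ} {γ : ℍˣ} (hγ : (γ : ℍ) ≠ 1) :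
    fixSpace (diagAt (Fin.last n) (γ : ℍ)) =
      LinearMap.ker (LinearMap.proj (R := ℍᵐᵒᵖ) (φ := fun _ : Fin (n+1) => ℍ) (Fin.last n)) := by
  ext u
  rw [mem_fixSpace, diagAt_mulVec, LinearMap.mem_ker, LinearMap.proj_apply]
  constructor
  · intro h
    have hL : (if Fin.last n = Fin.last n then (γ : ℍ) else 1) * u (Fin.last n)
        = u (Fin.last n) := congrFun h _
    rw [if_pos rfl] at hL
    have : ((γ : ℍ) - 1) * u (Fin.last n) = 0 := by rw [sub_mul, one_mul, hL, sub_self]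
    rcases mul_eq_zero.mp this with h' | h'
    · exact absurd h' (sub_ne_zero.mpr hγ)
    · exact h'
  · intro h
    funext i
    by_cases hi : i = Fin.last n
    · subst hi; rw [if_pos rfl, h, mul_zero]
    · rw [if_neg hi, one_mul]

/-- `u ↦ u (last) - γ * u m` as an `ℍᵐᵒᵖ`-linear map. -/
def fLin {n : ℕ} (m : Fin (n+1)) (γ : ℍ) : (Fin (n+1) → ℍ) →ₗ[ℍᵐᵒᵖ] ℍ :=
  (LinearMap.proj (R := ℍᵐᵒᵖ) (φ := fun _ : Fin (n+1) => ℍ) (Fin.last n)) -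
    (mulLeftOp γ).comp (LinearMap.proj (R := ℍᵐᵒᵖ) (φ := fun _ : Fin (n+1) => ℍ) m)

lemma fLin_apply {n : ℕ} (m : Fin (n+1)) (γ : ℍ) (u : Fin (n+1) → ℍ) :
    fLin m γ u = u (Fin.last n) - γ * u m := rfl

lemma fixSpace_swapRep {n : ℕ} {m : Fin (n+1)} (hm : m ≠ Fin.last n) (γ : ℍˣ) :
    fixSpace (diagAt (Fin.last n) (γ : ℍ) * permMat (Equiv.swap m (Fin.last n)) *
      diagAt (Fin.last n) ((γ⁻¹ : ℍˣ) : ℍ)) = LinearMap.ker (fLin m (γ : ℍ)) := by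
  ext u
  rw [mem_fixSpace, swapRep_mulVec hm γ, LinearMap.mem_ker, fLin_apply, sub_eq_zero]
  constructor
  · intro h
    have hmm : (if m = m then ((γ⁻¹ : ℍˣ) : ℍ) * u (Fin.last n)
        else if m = Fin.last n then (γ : ℍ) * u m else u m) = u m := congrFun h m
    rw [if_pos rfl] at hmm
    rw [← hmm, ← mul_assoc, Units.mul_inv, one_mul]
  · intro h
    funext i
    by_cases h1 : i = m
    · subst h1
      rw [if_pos rfl, h, ← mul_assoc, Units.inv_mul, one_mul]
    · by_cases h2 : i = Fin.last n
      · subst h2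
        rw [if_neg h1, if_pos rfl, h]
      · rw [if_neg h1, if_neg h2]

lemma proj_surj {n : ℕ} :
    Function.Surjective (LinearMap.proj (R := ℍᵐᵒᵖ) (φ := fun _ : Fin (n+1) => ℍ) (Fin.last n)) :=
  fun c => ⟨fun _ => c, rfl⟩

lemma fLin_surj {n : ℕ} {m : Fin (n+1)} (hm : m ≠ Fin.last n) (γ : ℍ) :
    Function.Surjective (fLin m γ) := by
  intro c
  refine ⟨Pi.single (Fin.last n) c, ?_⟩
  rw [fLin_apply, Pi.single_eq_same, Pi.single_eq_of_ne hm, mul_zero, sub_zero]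

lemma fixSpace_one {k : ℕ} : fixSpace (1 : Matrix (Fin k) (Fin k) ℍ) = ⊤ := by
  ext u
  simp [mem_fixSpace, Matrix.one_mulVec]

lemma row_last {n : ℕ} {Γ : Subgroup ℍˣ} {v : (Matrix (Fin (n+1)) (Fin (n+1)) ℍ)ˣ}
    (hv : v ∈ Wgrp (n+1) Γ Γ)
    (hfix : v.val.mulVec (Pi.single (Fin.last n) 1) = Pi.single (Fin.last n) 1)
    (u : Fin (n+1) → ℍ) :
    v.val.mulVec u (Fin.last n) = u (Fin.last n) := by
  obtain ⟨σ, d, -, hval⟩ := mono_of_mem hv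
  rw [hval, mono_mulVec] at hfix ⊢
  have key : (↑(d (σ (σ.symm (Fin.last n)))) : ℍ) *
      (Pi.single (Fin.last n) (1:ℍ) : Fin (n+1) → ℍ) (σ (σ.symm (Fin.last n)))
      = (Pi.single (Fin.last n) (1:ℍ) : Fin (n+1) → ℍ) (σ.symm (Fin.last n)) := congrFun hfix _
  rw [Equiv.apply_symm_apply, Pi.single_eq_same, mul_one] at key
  have hσL : σ.symm (Fin.last n) = Fin.last n := by
    by_contra hne
    rw [Pi.single_eq_of_ne hne] at key
    exact (d (Fin.last n)).ne_zero key
  rw [hσL, Pi.single_eq_same] at key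
  have hσL' : σ (Fin.last n) = Fin.last n := by
    conv_lhs => rw [← hσL]
    exact σ.apply_symm_apply _
  show (↑(d (σ (Fin.last n))) : ℍ) * u (σ (Fin.last n)) = u (Fin.last n)
  rw [hσL', key, one_mul]

lemma wcol {n : ℕ} (σ : Equiv.Perm (Fin (n+1))) (d : Fin (n+1) → ℍˣ) :
    (permMat σ * Matrix.diagonal fun i => (d i : ℍ)).mulVec (Pi.single (Fin.last n) 1)
      = fun i => if i = σ.symm (Fin.last n) then (↑(d (Fin.last n)) : ℍ) else 0 := by
  rw [mono_mulVec]
  funext i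
  by_cases h : σ i = Fin.last n
  · have hi : i = σ.symm (Fin.last n) := by rw [← h, Equiv.symm_apply_apply]
    rw [if_pos hi, h, Pi.single_eq_same, mul_one]
  · have hi : i ≠ σ.symm (Fin.last n) := fun hc => h (by rw [hc, Equiv.apply_symm_apply])
    rw [if_neg hi, Pi.single_eq_of_ne h, mul_zero]

/-- column of the three kinds of coset representatives -/
lemma col_diagAt {n : ℕ} (γ : ℍˣ) :
    (diagAt (Fin.last n) (γ : ℍ)).mulVec (Pi.single (Fin.last n) 1)
      = fun i => if i = Fin.last n then (γ : ℍ) else 0 := by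
  rw [diagAt_mulVec]
  funext i
  by_cases h : i = Fin.last n
  · subst h; rw [if_pos rfl, if_pos rfl, Pi.single_eq_same, mul_one]
  · rw [if_neg h, if_neg h, Pi.single_eq_of_ne h, one_mul]

lemma col_swapRep {n : ℕ} {m : Fin (n+1)} (hm : m ≠ Fin.last n) (γ : ℍˣ) :
    (diagAt (Fin.last n) (γ : ℍ) * permMat (Equiv.swap m (Fin.last n)) *
      diagAt (Fin.last n) ((γ⁻¹ : ℍˣ) : ℍ)).mulVec (Pi.single (Fin.last n) 1)
      = fun i => if i = m then ((γ⁻¹ : ℍˣ) : ℍ) else 0 := by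
  rw [swapRep_mulVec hm γ]
  funext i
  by_cases h1 : i = m
  · subst h1; rw [if_pos rfl, if_pos rfl, Pi.single_eq_same, mul_one]
  · rw [if_neg h1, if_neg h1]
    by_cases h2 : i = Fin.last n
    · subst h2; rw [if_pos rfl, Pi.single_eq_of_ne hm, mul_zero]
    · rw [if_neg h2, Pi.single_eq_of_ne h2]

lemma reps_inj {n : ℕ} {Γ : Subgroup ℍˣ} {x x' : Matrix (Fin (n+1)) (Fin (n+1)) ℍ}
    (hx : x ∈ cosetReps n Γ) (hx' : x' ∈ cosetReps n Γ)
    (h : x.mulVec (Pi.single (Fin.last n) 1) = x'.mulVec (Pi.single (Fin.last n) 1)) :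
    x = x' := by
  have single_eq : (Pi.single (Fin.last n) (1:ℍ) : Fin (n+1) → ℍ)
      = fun i => if i = Fin.last n then (1:ℍ) else 0 := by
    funext i; exact Pi.single_apply _ _ _
  simp only [cosetReps, Set.mem_union, Set.mem_singleton_iff, Set.mem_setOf_eq] at hx hx'
  rcases hx with (rfl | ⟨m, hm, γ, hγ, rfl⟩) | ⟨γ, hγ, hγ1, rfl⟩ <;>
    rcases hx' with (rfl | ⟨m', hm', γ', hγ', rfl⟩) | ⟨γ', hγ', hγ1', rfl⟩
  · rfl
  · rw [Matrix.one_mulVec, col_swapRep hm' γ', single_eq] at h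
    have := congrFun h (Fin.last n)
    rw [if_pos rfl, if_neg (Ne.symm hm')] at this
    exact absurd this one_ne_zero
  · rw [Matrix.one_mulVec, col_diagAt γ', single_eq] at h
    have := congrFun h (Fin.last n)
    rw [if_pos rfl, if_pos rfl] at this
    exact absurd (Units.ext this.symm) hγ1'
  · rw [Matrix.one_mulVec, col_swapRep hm γ, single_eq] at h
    have := congrFun h (Fin.last n)
    rw [if_pos rfl, if_neg (Ne.symm hm)] at this
    exact absurd this.symm one_ne_zero
  · rw [col_swapRep hm γ, col_swapRep hm' γ'] at h
    have hmm' : m = m' := by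
      by_contra hne
      have := congrFun h m
      rw [if_pos rfl, if_neg hne] at this
      exact (γ⁻¹).ne_zero this
    subst hmm'
    have := congrFun h m
    rw [if_pos rfl, if_pos rfl] at this
    have hγγ' : γ = γ' := inv_injective (Units.ext this)
    rw [hγγ']
  · rw [col_swapRep hm γ, col_diagAt γ'] at h
    have := congrFun h (Fin.last n)
    rw [if_neg (Ne.symm hm), if_pos rfl] at this
    exact absurd this.symm γ'.ne_zero
  · rw [Matrix.one_mulVec, col_diagAt γ, single_eq] at h
    have := congrFun h (Fin.last n)
    rw [if_pos rfl, if_pos rfl] at this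
    exact absurd (Units.ext this) hγ1
  · rw [col_diagAt γ, col_swapRep hm' γ'] at h
    have := congrFun h (Fin.last n)
    rw [if_pos rfl, if_neg (Ne.symm hm')] at this
    exact absurd this γ.ne_zero
  · rw [col_diagAt γ, col_diagAt γ'] at h
    have := congrFun h (Fin.last n)
    rw [if_pos rfl, if_pos rfl] at this
    rw [this]

lemma partB {n : ℕ} (Γ : Subgroup ℍˣ)
    (w : (Matrix (Fin (n+1)) (Fin (n+1)) ℍ)ˣ)
    (x : Matrix (Fin (n+1)) (Fin (n+1)) ℍ) (v : (Matrix (Fin (n+1)) (Fin (n+1)) ℍ)ˣ)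
    (hxreps : x ∈ cosetReps n Γ) (hv : v ∈ Wgrp (n+1) Γ Γ)
    (hvfix : v.val.mulVec (Pi.single (Fin.last n) 1) = Pi.single (Fin.last n) 1)
    (hfact : w.val = x * v.val) :
    fixSpace w.val = fixSpace x ⊓ fixSpace v.val ∧
      codimFix w.val = codimFix x + codimFix v.val := by
  have hrow := row_last hv hvfix
  have key1 : ∀ u, w.val.mulVec u = x.mulVec (v.val.mulVec u) := by
    intro u; rw [hfact, ← Matrix.mulVec_mulVec]
  simp only [cosetReps, Set.mem_union, Set.mem_singleton_iff, Set.mem_setOf_eq] at hxreps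
  rcases hxreps with (rfl | ⟨m1, hm, γ, hγ, rfl⟩) | ⟨γ, hγ, hγ1, rfl⟩
  · -- x = 1
    have hfact2 : w.val = v.val := by rw [hfact, one_mul]
    constructor
    · rw [hfact2, fixSpace_one, top_inf_eq]
    · rw [hfact2]
      have hfr : Module.finrank ℍᵐᵒᵖ
          (fixSpace (1 : Matrix (Fin (n+1)) (Fin (n+1)) ℍ)) = n + 1 := by
        rw [fixSpace_one]
        rw [finrank_top, finrank_pi_H]
      have : codimFix (1 : Matrix (Fin (n+1)) (Fin (n+1)) ℍ) = 0 := by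
        simp only [codimFix, hfr]
        omega
      rw [this, zero_add]
  · -- x = swap representative
    have fix_eq : fixSpace w.val =
        fixSpace (diagAt (Fin.last n) (γ : ℍ) * permMat (Equiv.swap m1 (Fin.last n)) *
          diagAt (Fin.last n) ((γ⁻¹ : ℍˣ) : ℍ)) ⊓ fixSpace v.val := by
      ext u
      rw [mem_fixSpace, Submodule.mem_inf, mem_fixSpace, mem_fixSpace]
      constructor
      · intro hu
        have hyL : v.val.mulVec u (Fin.last n) = u (Fin.last n) := hrow u
        have hu' : (diagAt (Fin.last n) (γ : ℍ) * permMat (Equiv.swap m1 (Fin.last n)) *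
            diagAt (Fin.last n) ((γ⁻¹ : ℍˣ) : ℍ)).mulVec (v.val.mulVec u) = u :=
          (key1 u).symm.trans hu
        rw [swapRep_mulVec hm (γ := γ)] at hu'
        have hL := congrFun hu' (Fin.last n)
        rw [if_neg (Ne.symm hm), if_pos rfl] at hL
        have hM := congrFun hu' m1
        rw [if_pos rfl, hyL] at hM
        have hvu : v.val.mulVec u = u := by
          funext i
          by_cases h1 : i = m1
          · have hvm : v.val.mulVec u m1 = ((γ⁻¹ : ℍˣ) : ℍ) * u (Fin.last n) := by
              rw [← hL, ← mul_assoc, Units.inv_mul, one_mul]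
            rw [h1, hvm]
            exact hM
          · by_cases h2 : i = Fin.last n
            · subst h2; exact hyL
            · have := congrFun hu' i
              rwa [if_neg h1, if_neg h2] at this
        have hxu : (diagAt (Fin.last n) (γ : ℍ) * permMat (Equiv.swap m1 (Fin.last n)) *
            diagAt (Fin.last n) ((γ⁻¹ : ℍˣ) : ℍ)).mulVec u = u := by
          have h3 := key1 u
          rw [hvu] at h3
          rw [← h3, hu]
        exact ⟨hxu, hvu⟩
      · rintro ⟨h1, h2⟩
        rw [key1, h2, h1]
    refine ⟨fix_eq, ?_⟩
    have hA : Module.finrank ℍᵐᵒᵖ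
        (fixSpace (diagAt (Fin.last n) (γ : ℍ) * permMat (Equiv.swap m1 (Fin.last n)) *
          diagAt (Fin.last n) ((γ⁻¹ : ℍˣ) : ℍ))) = (n+1) - 1 := by
      rw [fixSpace_swapRep hm (γ := γ)]
      exact finrank_ker_of_surj _ (fLin_surj hm (γ : ℍ))
    have hbB : (Pi.single (Fin.last n) 1 : Fin (n+1) → ℍ) ∈ fixSpace v.val :=
      mem_fixSpace.mpr hvfix
    have hbA : (Pi.single (Fin.last n) 1 : Fin (n+1) → ℍ) ∉
        fixSpace (diagAt (Fin.last n) (γ : ℍ) * permMat (Equiv.swap m1 (Fin.last n)) *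
          diagAt (Fin.last n) ((γ⁻¹ : ℍˣ) : ℍ)) := by
      intro hmem
      rw [mem_fixSpace, swapRep_mulVec hm (γ := γ)] at hmem
      have := congrFun hmem (Fin.last n)
      rw [if_neg (Ne.symm hm), if_pos rfl, Pi.single_eq_same, Pi.single_eq_of_ne hm,
        mul_zero] at this
      exact one_ne_zero this.symm
    simp only [codimFix]
    rw [fix_eq]
    exact codim_add _ _ hA (by omega) _ hbB hbA
  · -- x = diagonal representative
    have hγ1' : (γ : ℍ) ≠ 1 := fun hc => hγ1 (Units.ext hc)
    have fix_eq : fixSpace w.val =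
        fixSpace (diagAt (Fin.last n) (γ : ℍ)) ⊓ fixSpace v.val := by
      ext u
      rw [mem_fixSpace, Submodule.mem_inf, mem_fixSpace, mem_fixSpace]
      constructor
      · intro hu
        have hyL : v.val.mulVec u (Fin.last n) = u (Fin.last n) := hrow u
        have hu' : (diagAt (Fin.last n) (γ : ℍ)).mulVec (v.val.mulVec u) = u :=
          (key1 u).symm.trans hu
        rw [diagAt_mulVec] at hu'
        have hvu : v.val.mulVec u = u := by
          funext i
          by_cases h2 : i = Fin.last n
          · subst h2; exact hyL
          · have := congrFun hu' i
            rwa [if_neg h2, one_mul] at this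
        have hxu : (diagAt (Fin.last n) (γ : ℍ)).mulVec u = u := by
          have h3 := key1 u
          rw [hvu] at h3
          rw [← h3, hu]
        exact ⟨hxu, hvu⟩
      · rintro ⟨h1, h2⟩
        rw [key1, h2, h1]
    refine ⟨fix_eq, ?_⟩
    have hA : Module.finrank ℍᵐᵒᵖ (fixSpace (diagAt (Fin.last n) (γ : ℍ))) = (n+1) - 1 := by
      rw [fixSpace_diagAt hγ1']
      exact finrank_ker_of_surj _ proj_surj
    have hbB : (Pi.single (Fin.last n) 1 : Fin (n+1) → ℍ) ∈ fixSpace v.val :=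
      mem_fixSpace.mpr hvfix
    have hbA : (Pi.single (Fin.last n) 1 : Fin (n+1) → ℍ) ∉
        fixSpace (diagAt (Fin.last n) (γ : ℍ)) := by
      intro hmem
      rw [mem_fixSpace, diagAt_mulVec] at hmem
      have := congrFun hmem (Fin.last n)
      rw [if_pos rfl, Pi.single_eq_same, mul_one] at this
      exact hγ1' this
    simp only [codimFix]
    rw [fix_eq]
    exact codim_add _ _ hA (by omega) _ hbB hbA

lemma partA {n : ℕ} (Γ : Subgroup ℍˣ)
    (w : (Matrix (Fin (n+1)) (Fin (n+1)) ℍ)ˣ) (hw : w ∈ Wgrp (n+1) Γ Γ) :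
    ∃! p : Matrix (Fin (n+1)) (Fin (n+1)) ℍ × (Matrix (Fin (n+1)) (Fin (n+1)) ℍ)ˣ,
      p.1 ∈ cosetReps n Γ ∧ p.2 ∈ Wgrp (n+1) Γ Γ ∧
      p.2.val.mulVec (Pi.single (Fin.last n) 1) = Pi.single (Fin.last n) 1 ∧
      w.val = p.1 * p.2.val := by
  obtain ⟨σ, d, hd, hval⟩ := mono_of_mem hw
  set m₀ := σ.symm (Fin.last n) with hm₀
  set c := d (Fin.last n) with hc
  have hwcol : w.val.mulVec (Pi.single (Fin.last n) 1)
      = fun i => if i = m₀ then (c : ℍ) else 0 := by rw [hval]; exact wcol σ d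
  -- construct X
  have hX : ∃ X : (Matrix (Fin (n+1)) (Fin (n+1)) ℍ)ˣ,
      X.val ∈ cosetReps n Γ ∧ X ∈ Wgrp (n+1) Γ Γ ∧
      X.val.mulVec (Pi.single (Fin.last n) 1) = w.val.mulVec (Pi.single (Fin.last n) 1) := by
    by_cases hm0 : m₀ = Fin.last n
    · by_cases hc1 : c = 1
      · refine ⟨1, Or.inl (Or.inl (Set.mem_singleton_iff.mpr Units.val_one)), one_mem _, ?_⟩
        rw [Units.val_one, Matrix.one_mulVec, hwcol]
        funext i
        simp only [Pi.single_apply]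
        rw [hm0, hc1, Units.val_one]
      · refine ⟨diagAtUnit (Fin.last n) c, ?_, diagAtUnit_mem _ (hd _), ?_⟩
        · rw [diagAtUnit_val]
          exact Or.inr ⟨c, hd _, hc1, rfl⟩
        · rw [diagAtUnit_val, col_diagAt, hwcol, ← hm0]
    · refine ⟨diagAtUnit (Fin.last n) c⁻¹ * permUnit (Equiv.swap m₀ (Fin.last n)) *
        diagAtUnit (Fin.last n) c, ?_, ?_, ?_⟩
      · rw [Units.val_mul, Units.val_mul, diagAtUnit_val, diagAtUnit_val]
        refine Or.inl (Or.inr ⟨m₀, hm0, c⁻¹, inv_mem (hd _), ?_⟩)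
        rw [inv_inv]
        rfl
      · exact mul_mem (mul_mem (diagAtUnit_mem _ (inv_mem (hd _)))
          (permUnit_mem _ _ _)) (diagAtUnit_mem _ (hd _))
      · rw [Units.val_mul, Units.val_mul, diagAtUnit_val, diagAtUnit_val]
        have hPU : (permUnit (Equiv.swap m₀ (Fin.last n))).val
            = permMat (Equiv.swap m₀ (Fin.last n)) := rfl
        rw [hPU]
        have hcs := col_swapRep hm0 c⁻¹
        rw [inv_inv] at hcs
        rw [hcs, hwcol]
  obtain ⟨X, hXreps, hXmem, hXcol⟩ := hX
  refine ⟨(X.val, X⁻¹ * w), ⟨hXreps, mul_mem (inv_mem hXmem) hw, ?_, ?_⟩, ?_⟩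
  · rw [Units.val_mul, ← Matrix.mulVec_mulVec, ← hXcol, Matrix.mulVec_mulVec,
      ← Units.val_mul, inv_mul_cancel X, Units.val_one, Matrix.one_mulVec]
  · rw [Units.val_mul, ← mul_assoc, ← Units.val_mul, mul_inv_cancel X, Units.val_one, one_mul]
  · rintro ⟨y, z⟩ ⟨hy, hz, hzfix, hfact⟩
    have hzfix' : z.val.mulVec (Pi.single (Fin.last n) 1) = Pi.single (Fin.last n) 1 := hzfix
    have hfact0 : w.val = y * z.val := hfact
    have hycol : y.mulVec (Pi.single (Fin.last n) 1) = w.val.mulVec (Pi.single (Fin.last n) 1) := by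
      rw [hfact0, ← Matrix.mulVec_mulVec, hzfix']
    have hy0 : y ∈ cosetReps n Γ := hy
    have hyX : y = X.val := reps_inj hy0 hXreps (hycol.trans hXcol.symm)
    have hfact' : w.val = y * z.val := hfact
    have h5 : X.val * z.val = X.val * (X⁻¹ * w).val := by
      rw [Units.val_mul, ← mul_assoc, ← Units.val_mul X X⁻¹, mul_inv_cancel X, Units.val_one,
        one_mul, ← hyX, ← hfact']
    have h6 : z.val = (X⁻¹ * w).val := by
      have h7 := congrArg (fun M => (X⁻¹).val * M) h5
      rwa [← mul_assoc, ← mul_assoc, Units.inv_mul, one_mul, one_mul] at h7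
    have hzv : z = X⁻¹ * w := Units.ext h6
    rw [hyX, hzv]

/-- Each `w ∈ W_{n+1}(Γ)` factors uniquely as `w = x·v` with `v` in the copy of `W_n(Γ)`
fixing `e_{n+1}` (the stabilizer of the last basis vector) and `x` among the listed coset
representatives; moreover `fix(w) = fix(x) ∩ fix(v)` and the codimensions add. -/
theorem Wn_product_decomposition (n : ℕ) (hn : 1 ≤ n)
    (Γ : Subgroup ℍˣ) (hΓ : (Γ : Set ℍˣ).Finite)
    (w : (Matrix (Fin (n+1)) (Fin (n+1)) ℍ)ˣ) (hw : w ∈ Wgrp (n+1) Γ Γ) :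
    (∃! p : Matrix (Fin (n+1)) (Fin (n+1)) ℍ × (Matrix (Fin (n+1)) (Fin (n+1)) ℍ)ˣ,
      p.1 ∈ cosetReps n Γ ∧ p.2 ∈ Wgrp (n+1) Γ Γ ∧
      p.2.val.mulVec (Pi.single (Fin.last n) 1) = Pi.single (Fin.last n) 1 ∧
      w.val = p.1 * p.2.val) ∧
    (∀ x : Matrix (Fin (n+1)) (Fin (n+1)) ℍ, ∀ v : (Matrix (Fin (n+1)) (Fin (n+1)) ℍ)ˣ,
      x ∈ cosetReps n Γ → v ∈ Wgrp (n+1) Γ Γ →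
      v.val.mulVec (Pi.single (Fin.last n) 1) = Pi.single (Fin.last n) 1 →
      w.val = x * v.val →
      fixSpace w.val = fixSpace x ⊓ fixSpace v.val ∧
      codimFix w.val = codimFix x + codimFix v.val) :=
  ⟨partA Γ w hw, fun x v hx hv hvfix hfact => partB Γ w x v hx hv hvfix hfact⟩
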